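/- There does not exist a function W: {0,1}^ℕ → ℝ such that (i) W(x) > W(y) whenever x ≥ y pointwise and {i : x_i > y_i} has upper asymptotic density 1, and (ii) W(x) = W(y) whenever y is obtained from x by transposing two coordinates. -/

import Mathlib

open Filter Topology

noncomputable def upperDensity (S : Set ℕ) : ℝ :=
  Filter.limsup (fun n : ℕ => (Nat.card (↥(S ∩ Set.Icc 1 n)) : ℝ) / (n : ℝ)) Filter.atTop

lemma fin2_cases (v : Fin 2) : v = 0 ∨ v = 1 := by
  match v with
  | 0 => exact Or.inl rfl
  | 1 => exact Or.inr rfl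

lemma fin2_zero_lt_one : (0 : Fin 2) < 1 := by decide

/-- If `S` contains, for arbitrarily large `k`, the block `(k!, (k+1)!]` minus a
fixed finite set `F`, then `S` has upper density one. -/
lemma blocks_upperDensity_one (S F : Set ℕ) (hF : F.Finite)
    (h : ∀ m : ℕ, ∃ k, m ≤ k ∧
      Set.Ioc (Nat.factorial k) (Nat.factorial (k + 1)) \ F ⊆ S) :
    upperDensity S = 1 := by
  classical
  set f : ℕ → ℝ := fun n => (Nat.card (↥(S ∩ Set.Icc 1 n)) : ℝ) / (n : ℝ) with hf
  have hcard : ∀ n : ℕ, (Nat.card ↥(S ∩ Set.Icc 1 n)) ≤ n := by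
    intro n
    rw [Nat.card_coe_set_eq]
    calc (S ∩ Set.Icc 1 n).ncard ≤ (Set.Icc 1 n).ncard :=
          Set.ncard_le_ncard Set.inter_subset_right (Set.finite_Icc 1 n)
      _ = n := by
          rw [← Finset.coe_Icc, Set.ncard_coe_finset, Nat.card_Icc]; omega
  have hub : ∀ n : ℕ, 1 ≤ n → f n ≤ 1 := by
    intro n hn
    have hn' : (0:ℝ) < n := by exact_mod_cast hn
    rw [hf]
    simp only
    rw [div_le_one hn']
    exact_mod_cast hcard n
  have hev : ∀ᶠ n : ℕ in atTop, f n ≤ 1 := eventually_atTop.2 ⟨1, hub⟩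
  have hbdd : IsBoundedUnder (· ≤ ·) atTop f := isBoundedUnder_of_eventually_le hev
  have hcob : IsCoboundedUnder (· ≤ ·) atTop f :=
    isCoboundedUnder_le_of_le atTop (x := 0) (fun n => by simp only [hf]; positivity)
  have hfreq : ∀ ε : ℝ, 0 < ε → ∃ᶠ n : ℕ in atTop, 1 - ε ≤ f n := by
    intro ε hε
    rw [frequently_atTop]
    intro N
    set c : ℕ := F.ncard with hc
    obtain ⟨k, hk1, hk2⟩ := h (max N ⌈(1 + (c:ℝ)) / ε⌉₊)
    have hkN : N ≤ k := le_trans (le_max_left _ _) hk1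
    have hkc : (1 + (c:ℝ)) / ε ≤ k := by
      have h1 : ⌈(1 + (c:ℝ)) / ε⌉₊ ≤ k := le_trans (le_max_right _ _) hk1
      exact_mod_cast Nat.ceil_le.mp h1
    set n : ℕ := (k + 1).factorial with hn
    have hnN : N ≤ n := by
      have : k + 1 ≤ n := Nat.self_le_factorial (k + 1)
      omega
    refine ⟨n, hnN, ?_⟩
    -- counting
    have hsub : Set.Ioc k.factorial n \ F ⊆ S ∩ Set.Icc 1 n := by
      intro i hi
      refine ⟨hk2 hi, ?_, hi.1.2⟩
      have := Nat.factorial_pos k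
      have := hi.1.1
      omega
    have hfin1 : (S ∩ Set.Icc 1 n).Finite := (Set.finite_Icc 1 n).inter_of_right S
    have h2 : (Set.Ioc k.factorial n \ F).ncard ≤ (S ∩ Set.Icc 1 n).ncard :=
      Set.ncard_le_ncard hsub hfin1
    have h1 : (Set.Ioc k.factorial n).ncard ≤ (Set.Ioc k.factorial n \ F).ncard + c := by
      calc (Set.Ioc k.factorial n).ncard
          ≤ ((Set.Ioc k.factorial n \ F) ∪ F).ncard := by
            apply Set.ncard_le_ncard
            · intro i hi
              by_cases hiF : i ∈ F
              · exact Or.inr hiF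
              · exact Or.inl ⟨hi, hiF⟩
            · exact (((Set.finite_Ioc _ _).diff (t := F))).union hF
        _ ≤ (Set.Ioc k.factorial n \ F).ncard + c := Set.ncard_union_le _ _
    have h3 : (Set.Ioc k.factorial n).ncard = n - k.factorial := by
      rw [← Finset.coe_Ioc, Set.ncard_coe_finset, Nat.card_Ioc]
    have hkle : k.factorial ≤ n := Nat.factorial_le (by omega)
    have hkey : n ≤ (S ∩ Set.Icc 1 n).ncard + c + k.factorial := by omega
    -- real arithmetic
    have hkeyR : (n:ℝ) ≤ (Nat.card ↥(S ∩ Set.Icc 1 n) : ℝ) + c + k.factorial := by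
      rw [Nat.card_coe_set_eq]
      exact_mod_cast hkey
    have hn0 : (0:ℝ) < n := by exact_mod_cast Nat.factorial_pos (k+1)
    have hfact : (n:ℝ) = ((k:ℝ) + 1) * k.factorial := by
      rw [hn]; push_cast [Nat.factorial_succ]; ring
    have hfac1 : (1:ℝ) ≤ k.factorial := by exact_mod_cast Nat.factorial_pos k
    have hek : 1 + (c:ℝ) ≤ ε * k := by
      rw [div_le_iff₀ hε] at hkc
      linarith
    have hcnn : (0:ℝ) ≤ c := Nat.cast_nonneg c
    rw [hf]
    simp only
    rw [le_div_iff₀ hn0]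
    nlinarith [mul_nonneg (sub_nonneg.2 hek) (by linarith : (0:ℝ) ≤ (k.factorial:ℝ)),
      mul_nonneg hcnn (sub_nonneg.2 hfac1), hε.le]
  have hle : Filter.limsup f atTop ≤ 1 := limsup_le_of_le hcob hev
  have hge : (1:ℝ) ≤ Filter.limsup f atTop := by
    apply le_of_forall_sub_le
    intro ε hε
    exact le_limsup_of_frequently_le (hfreq ε hε) hbdd
  exact le_antisymm hle hge

/-- Cleaning lemma: using finitely many transpositions (Anonymity), any sequence can
be modified, keeping its `W`-value, so that its ones avoid the finite set `E`,
landing instead in a finite subset `P` of a prescribed infinite set `G` of zeros. -/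
lemma exists_clean (W : (ℕ → Fin 2) → ℝ)
    (hW2 : ∀ (x : ℕ → Fin 2) (i j : ℕ), W (x ∘ Equiv.swap i j) = W x)
    (E : Finset ℕ) (x : ℕ → Fin 2) (G : Set ℕ) (hG : G.Infinite)
    (hxG : ∀ i ∈ G, x i = 0) :
    ∃ (y : ℕ → Fin 2) (P : Finset ℕ), W y = W x ∧ ↑P ⊆ G ∧
      ∀ i, y i = 1 → (x i = 1 ∧ i ∉ E) ∨ i ∈ P := by
  classical
  induction E using Finset.induction_on with
  | empty =>
      exact ⟨x, ∅, rfl, by simp, fun i h => Or.inl ⟨h, fun h' => Finset.notMem_empty i h'⟩⟩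
  | @insert a E ha ih =>
      obtain ⟨y, P, hWy, hPG, hy⟩ := ih
      obtain ⟨g, hgG, hgP⟩ : ∃ g, g ∈ G ∧ g ∉ P := by
        obtain ⟨g, hg⟩ := (hG.diff P.finite_toSet).nonempty
        exact ⟨g, hg.1, fun h => hg.2 (Finset.mem_coe.2 h)⟩
      have hyg : y g = 0 := by
        rcases fin2_cases (y g) with h0 | h1
        · exact h0
        · rcases hy g h1 with ⟨hx1, _⟩ | hP
          · rw [hxG g hgG] at hx1; exact absurd hx1 (by decide)
          · exact absurd hP hgP
      refine ⟨y ∘ Equiv.swap a g, insert g P, by rw [hW2]; exact hWy, ?_, ?_⟩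
      · intro i hi
        rcases Finset.mem_insert.1 (Finset.mem_coe.1 hi) with rfl | hiP
        · exact hgG
        · exact hPG (Finset.mem_coe.2 hiP)
      · intro i hi
        by_cases hia : i = a
        · subst hia
          rw [Function.comp_apply, Equiv.swap_apply_left, hyg] at hi
          exact absurd hi (by decide)
        by_cases hig : i = g
        · exact Or.inr (by rw [hig]; exact Finset.mem_insert_self g P)
        · rw [Function.comp_apply, Equiv.swap_apply_of_ne_of_ne hia hig] at hi
          rcases hy i hi with ⟨hx1, hiE⟩ | hiP
          · exact Or.inl ⟨hx1, fun h => hiE (Finset.mem_of_mem_insert_of_ne h hia)⟩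
          · exact Or.inr (Finset.mem_insert_of_mem hiP)

/-- there is no W : {0,1}^ℕ → ℝ satisfying Weak Upper Asymptotic
Pareto (W(x) > W(y) whenever x dominates y and {i : x_i > y_i} has upper
density 1) and Anonymity (W is invariant under transposing two coordinates). -/
theorem stmt_8 :
    ¬ ∃ W : (ℕ → Fin 2) → ℝ,
      (∀ x y : ℕ → Fin 2, (∀ i, y i ≤ x i) →
        upperDensity {i | y i < x i} = 1 → W y < W x) ∧
      (∀ (x : ℕ → Fin 2) (i j : ℕ), W (x ∘ Equiv.swap i j) = W x) := by
  classical
  rintro ⟨W, hP, hAn⟩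
  set e : ℕ ≃ ℚ := (Denumerable.eqv ℚ).symm with he
  set J : ℕ → Set ℕ := fun k => Set.Ioc (Nat.factorial k) (Nat.factorial (k + 1)) with hJ
  have hJdisj : ∀ k l : ℕ, k ≠ l → ∀ i, i ∈ J k → i ∈ J l → False := by
    have key : ∀ k l : ℕ, k < l → ∀ i, i ∈ J k → i ∈ J l → False := by
      intro k l hkl i hik hil
      have h1 : (k + 1).factorial ≤ l.factorial := Nat.factorial_le (by omega)
      have h2 := hik.2
      have h3 := hil.1
      omega
    intro k l hkl i hik hil
    rcases hkl.lt_or_gt with h | h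
    · exact key k l h i hik hil
    · exact key l k h i hil hik
  -- rationals are dense with arbitrarily large indices
  have hQ : ∀ t s : ℝ, t < s → ∀ m : ℕ, ∃ k, m ≤ k ∧ t < (e k : ℝ) ∧ (e k : ℝ) < s := by
    intro t s hts m
    obtain ⟨a, hta, has⟩ := exists_rat_btwn hts
    obtain ⟨b, hab, hbs⟩ := exists_rat_btwn has
    have hab' : a < b := by exact_mod_cast hab
    have hinf : (Set.Ioo a b).Infinite := Set.Ioo_infinite hab'
    have hinf2 : ((e : ℕ → ℚ) ⁻¹' Set.Ioo a b).Infinite :=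
      hinf.preimage (by intro q _; exact ⟨e.symm q, by simp⟩)
    obtain ⟨k, hk, hmk⟩ := hinf2.exists_gt m
    refine ⟨k, hmk.le, ?_, ?_⟩
    · have h1 : a < e k := hk.1
      have : (a:ℝ) < (e k : ℝ) := by exact_mod_cast h1
      linarith
    · have h1 : e k < b := hk.2
      have : (e k : ℝ) < (b:ℝ) := by exact_mod_cast h1
      linarith
  have hQ' : ∀ (t : ℝ) (m : ℕ), ∃ k, m ≤ k ∧ t < (e k : ℝ) ∧ (e k : ℝ) < t + 1 / (m + 1) :=
    fun t m => hQ t (t + 1 / (m + 1)) (lt_add_of_pos_right t (by positivity)) m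
  choose kt hkt1 hkt2 hkt3 using hQ'
  set A : ℝ → Set ℕ := fun t => {i | ∃ k, (e k : ℝ) < t ∧ i ∈ J k} with hA
  set B : ℝ → Set ℕ := fun t => A t ∪ ⋃ m, J (kt t m) with hB
  set chi : Set ℕ → ℕ → Fin 2 := fun S i => if i ∈ S then 1 else 0 with hchi
  have hchi1 : ∀ (S : Set ℕ) i, i ∈ S → chi S i = 1 := by intro S i h; simp [hchi, h]
  have hchi0 : ∀ (S : Set ℕ) i, i ∉ S → chi S i = 0 := by intro S i h; simp [hchi, h]
  have hchiB : ∀ (S : Set ℕ) i, chi S i = 1 → i ∈ S := by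
    intro S i h
    by_contra hc
    rw [hchi0 S i hc] at h
    exact absurd h (by decide)
  have hAmono : ∀ t s : ℝ, t ≤ s → A t ⊆ A s := by
    rintro t s h i ⟨k, hk, hik⟩
    exact ⟨k, lt_of_lt_of_le hk h, hik⟩
  have hJA : ∀ (t : ℝ) (k : ℕ), t ≤ (e k : ℝ) → ∀ i ∈ J k, i ∉ A t := by
    rintro t k h i hi ⟨k', hk', hik'⟩
    rcases eq_or_ne k' k with rfl | hne
    · linarith
    · exact hJdisj k' k hne i hik' hi
  -- Step 1 : W (chi (A t)) < W (chi (B t))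
  have hstep1 : ∀ t : ℝ, W (chi (A t)) < W (chi (B t)) := by
    intro t
    apply hP
    · intro i
      by_cases hi : i ∈ A t
      · rw [hchi1 _ _ hi, hchi1 _ _ (Set.mem_union_left _ hi)]
      · rw [hchi0 _ _ hi]
        exact Fin.zero_le _
    · apply blocks_upperDensity_one _ ∅ Set.finite_empty
      intro m
      refine ⟨kt t m, hkt1 t m, ?_⟩
      intro i hi
      have hiJ : i ∈ J (kt t m) := hi.1
      have hiB : i ∈ B t := Set.mem_union_right _ (Set.mem_iUnion.2 ⟨m, hiJ⟩)
      have hiA : i ∉ A t := hJA t (kt t m) (hkt2 t m).le i hiJ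
      show chi (A t) i < chi (B t) i
      rw [hchi0 _ _ hiA, hchi1 _ _ hiB]
      exact fin2_zero_lt_one
  -- good blocks for t < s : blocks inside A s, disjoint from B t, with large index
  have hGood : ∀ t s : ℝ, t < s → ∀ M : ℕ, ∃ k, M ≤ k ∧ J k ⊆ A s ∧ ∀ i ∈ J k, i ∉ B t := by
    intro t s hts M
    set M0 : ℕ := ⌈2 / (s - t)⌉₊ with hM0
    set N0 : ℕ := (Finset.range M0).sup (kt t) + 1 with hN0
    obtain ⟨k, hk1, hk2, hk3⟩ := hQ ((t + s) / 2) s (by linarith) (max M N0)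
    refine ⟨k, le_trans (le_max_left _ _) hk1, fun i hi => ⟨k, hk3, hi⟩, ?_⟩
    intro i hi hiB
    rcases hiB with hiA | hiD
    · obtain ⟨k', hk', hik'⟩ := hiA
      rcases eq_or_ne k' k with rfl | hne
      · linarith
      · exact hJdisj k' k hne i hik' hi
    · obtain ⟨m, him⟩ := Set.mem_iUnion.1 hiD
      rcases eq_or_ne (kt t m) k with heq | hne
      · have h1 : (e k : ℝ) < t + 1 / (m + 1) := by rw [← heq]; exact hkt3 t m
        have hpos : (0:ℝ) < s - t := by linarith
        have hm1 : (0:ℝ) < (m:ℝ) + 1 := by positivity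
        have h2 : (s - t) / 2 < 1 / ((m:ℝ) + 1) := by linarith
        rw [div_lt_div_iff₀ (by norm_num) hm1] at h2
        have hm0 : (m:ℝ) < 2 / (s - t) := by
          rw [lt_div_iff₀ hpos]
          nlinarith
        have hmM0 : m < M0 := Nat.lt_ceil.2 hm0
        have hle : kt t m ≤ (Finset.range M0).sup (kt t) :=
          Finset.le_sup (Finset.mem_range.2 hmM0)
        have hkN0 : N0 ≤ k := le_trans (le_max_right _ _) hk1
        omega
      · exact hJdisj _ _ hne i him hi
  -- B t \ A s is finite for t < s
  have hFin : ∀ t s : ℝ, t < s → (B t \ A s).Finite := by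
    intro t s hts
    set M1 : ℕ := ⌈1 / (s - t)⌉₊ with hM1
    apply Set.Finite.subset
      (Set.Finite.biUnion (Finset.range M1).finite_toSet
        (fun m _ => (Set.finite_Ioc (Nat.factorial (kt t m)) (Nat.factorial (kt t m + 1)))))
    rintro i ⟨hiB, hiA⟩
    rcases hiB with hiAt | hiD
    · exact absurd (hAmono t s hts.le hiAt) hiA
    · obtain ⟨m, him⟩ := Set.mem_iUnion.1 hiD
      have hmM1 : m ∈ Finset.range M1 := by
        rw [Finset.mem_range]
        by_contra hm
        push_neg at hm
        have hpos : (0:ℝ) < s - t := by linarith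
        have hM1le : 1 / (s - t) ≤ (M1:ℝ) := Nat.le_ceil _
        have hmge : (M1:ℝ) ≤ (m:ℝ) := by exact_mod_cast hm
        have h1 : 1 / ((m:ℝ) + 1) ≤ s - t := by
          rw [div_le_iff₀ (by positivity)]
          rw [div_le_iff₀ hpos] at hM1le
          nlinarith
        have h2 : (e (kt t m) : ℝ) < s := by
          have := hkt3 t m
          linarith
        exact hiA ⟨kt t m, h2, him⟩
      exact Set.mem_biUnion hmM1 him
  -- Step 2 : W (chi (B t)) < W (chi (A s)) for t < s
  have hstep2 : ∀ t s : ℝ, t < s → W (chi (B t)) < W (chi (A s)) := by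
    intro t s hts
    have hfin := hFin t s hts
    set G : Set ℕ := A s \ B t with hG
    have hGinf : G.Infinite := by
      apply Set.infinite_of_forall_exists_gt
      intro a
      obtain ⟨k, hk1, hk2, hk3⟩ := hGood t s hts (a + 1)
      have hk0 : 1 ≤ k := by omega
      have hiJ : k.factorial + 1 ∈ J k := by
        constructor
        · omega
        · have : k.factorial < (k+1).factorial := by
            rw [Nat.factorial_succ]
            have := Nat.factorial_pos k
            nlinarith
          omega
      refine ⟨k.factorial + 1, ⟨hk2 hiJ, hk3 _ hiJ⟩, ?_⟩
      have := Nat.self_le_factorial k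
      omega
    have hxG : ∀ i ∈ G, chi (B t) i = 0 := fun i hi => hchi0 _ _ hi.2
    obtain ⟨y, P, hWy, hPG, hy⟩ := exists_clean W hAn hfin.toFinset (chi (B t)) G hGinf hxG
    have hy1 : ∀ i, y i = 1 → i ∈ A s := by
      intro i hi
      rcases hy i hi with ⟨hxi, hiE⟩ | hiP
      · have hiB : i ∈ B t := hchiB _ _ hxi
        by_contra hiA
        exact hiE (hfin.mem_toFinset.2 ⟨hiB, hiA⟩)
      · exact (hPG hiP).1
    rw [← hWy]
    apply hP
    · intro i
      rcases fin2_cases (y i) with h | h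
      · rw [h]; exact Fin.zero_le _
      · rw [h, hchi1 _ _ (hy1 i h)]
    · apply blocks_upperDensity_one _ ↑P P.finite_toSet
      intro m
      obtain ⟨k, hk1, hk2, hk3⟩ := hGood t s hts m
      refine ⟨k, hk1, ?_⟩
      rintro i ⟨hik, hiP⟩
      have hiA : i ∈ A s := hk2 hik
      have hy0 : y i = 0 := by
        rcases fin2_cases (y i) with h | h
        · exact h
        · exfalso
          rcases hy i h with ⟨hxi, _⟩ | hiP'
          · exact hk3 i hik (hchiB _ _ hxi)
          · exact hiP (Finset.mem_coe.2 hiP')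
      show y i < chi (A s) i
      rw [hy0, hchi1 _ _ hiA]
      exact fin2_zero_lt_one
  -- conclusion: an injection ℝ → ℚ, contradiction
  have hr : ∀ t : ℝ, ∃ q : ℚ, W (chi (A t)) < (q:ℝ) ∧ (q:ℝ) < W (chi (B t)) :=
    fun t => exists_rat_btwn (hstep1 t)
  choose r hr1 hr2 using hr
  have hmono : StrictMono r := by
    intro t s hts
    have h1 : (r t : ℝ) < (r s : ℝ) :=
      lt_trans (hr2 t) (lt_trans (hstep2 t s hts) (hr1 s))
    exact_mod_cast h1
  have hcount : Countable ℝ := hmono.injective.countable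
  exact Cardinal.not_countable_real Set.countable_univ
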